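/- (Theorem 5.1, transient performance bound) For all t ≥ 0, ‖e(t) + x̃(t)‖_∞ ≤ √(ε_V / λ_min(P)) · (1 + √(κ λ_max(P) / (2 ξ λ_min(R)))), where ε_V := γ^{-1} ‖W̃(0) Λ^{1/2}‖_F² + λ_max(P) ‖e(0)‖₂²; since x(t) − x_ri(t) = e(t) + x̃(t), this bounds the L∞ distance between the plant state and the ideal reference state. -/

import Mathlib

open Matrix Filter

noncomputable section

/-- Euclidean norm ‖·‖₂ of a vector. -/
def norm2 {n : ℕ} (v : Fin n → ℝ) : ℝ := Real.sqrt (∑ i, v i ^ 2)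

/-- Supremum (infinity) norm ‖·‖_∞ of a vector (the sup norm on `Fin n → ℝ`). -/
def normInf {n : ℕ} (v : Fin n → ℝ) : ℝ := ‖v‖

/-- Frobenius norm ‖·‖_F of a matrix. -/
def normF {N m : ℕ} (W : Matrix (Fin N) (Fin m) ℝ) : ℝ := Real.sqrt (∑ i, ∑ j, W i j ^ 2)

/-- Smallest eigenvalue λ_min of a real symmetric (Hermitian) matrix. -/
def lamMin {n : ℕ} {A : Matrix (Fin n) (Fin n) ℝ} (hA : A.IsHermitian) : ℝ := ⨅ i, hA.eigenvalues i

/-- Largest eigenvalue λ_max of a real symmetric (Hermitian) matrix. -/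
def lamMax {n : ℕ} {A : Matrix (Fin n) (Fin n) ℝ} (hA : A.IsHermitian) : ℝ := ⨆ i, hA.eigenvalues i

/-- A real square matrix is Hurwitz if every (complex) eigenvalue has negative real part. -/
def Hurwitz {n : ℕ} (A : Matrix (Fin n) (Fin n) ℝ) : Prop :=
  ∀ μ : ℂ, (A.map Complex.ofReal).charpoly.IsRoot μ → μ.re < 0

/-- The Lyapunov function V(e, W̃) = eᵀ P e + γ⁻¹ tr((W̃ Λ^{1/2})ᵀ (W̃ Λ^{1/2})). -/
def Vlyap {n N m : ℕ} (γ : ℝ) (P : Matrix (Fin n) (Fin n) ℝ)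
    (Lhalf : Matrix (Fin m) (Fin m) ℝ) (e : Fin n → ℝ) (W : Matrix (Fin N) (Fin m) ℝ) : ℝ :=
  e ⬝ᵥ (P *ᵥ e) + γ⁻¹ * ((W * Lhalf)ᵀ * (W * Lhalf)).trace

/-- The augmented Lyapunov function V* of Theorem 5.1. -/
def Vstar {n N m : ℕ} (γ κ η ξ : ℝ) (P R : Matrix (Fin n) (Fin n) ℝ)
    (hP : P.IsHermitian) (hR : R.IsHermitian)
    (Lhalf : Matrix (Fin m) (Fin m) ℝ)
    (e : Fin n → ℝ) (W : Matrix (Fin N) (Fin m) ℝ) (eL xt : Fin n → ℝ) : ℝ :=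
  Vlyap γ P Lhalf e W + η⁻¹ * κ * (eL ⬝ᵥ (P *ᵥ eL))
    + 2 * ξ * κ⁻¹ * (lamMax hP)⁻¹ * lamMin hR * (xt ⬝ᵥ (P *ᵥ xt))

/-! ### Auxiliary lemmas -/

lemma rayleigh {n : ℕ} {A : Matrix (Fin n) (Fin n) ℝ} (hA : A.IsHermitian) (v : Fin n → ℝ) :
    lamMin hA * (∑ i, v i ^ 2) ≤ v ⬝ᵥ A *ᵥ v ∧ v ⬝ᵥ A *ᵥ v ≤ lamMax hA * (∑ i, v i ^ 2) := by
  classical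
  set U : Matrix (Fin n) (Fin n) ℝ := (Matrix.IsHermitian.eigenvectorUnitary hA : Matrix (Fin n) (Fin n) ℝ) with hU
  set w : Fin n → ℝ := v ᵥ* U with hw
  have hstar : star U = Uᵀ := by
    ext i j; simp [Matrix.conjTranspose_apply]
  have hUU : U * star U = 1 := (Matrix.mem_unitaryGroup_iff).mp (Matrix.IsHermitian.eigenvectorUnitary hA).2
  have claim2 : ∑ i, w i ^ 2 = ∑ i, v i ^ 2 := by
    have : w ⬝ᵥ w = v ⬝ᵥ v := by
      rw [hw]
      have : (v ᵥ* U) ⬝ᵥ (v ᵥ* U) = (v ᵥ* U) ⬝ᵥ (Uᵀ *ᵥ v) := by rw [Matrix.mulVec_transpose]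
      rw [this, Matrix.dotProduct_mulVec, Matrix.vecMul_vecMul, ← hstar, hUU, Matrix.vecMul_one]
    simpa [dotProduct, sq] using this
  have claim1 : v ⬝ᵥ A *ᵥ v = ∑ i, hA.eigenvalues i * w i ^ 2 := by
    conv_lhs => rw [Matrix.IsHermitian.spectral_theorem hA, Unitary.conjStarAlgAut_apply]
    rw [← Matrix.mulVec_mulVec, ← Matrix.mulVec_mulVec, Matrix.dotProduct_mulVec (A := U)]
    rw [hstar, Matrix.mulVec_transpose]
    simp only [← hw]
    simp [Matrix.mulVec_diagonal, dotProduct, sq]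
    ring_nf
    exact Finset.sum_congr rfl fun i _ => by ring
  constructor
  · rw [claim1, ← claim2, Finset.mul_sum]
    refine Finset.sum_le_sum fun i _ => ?_
    exact mul_le_mul_of_nonneg_right (ciInf_le (Set.finite_range _).bddBelow i) (sq_nonneg _)
  · rw [claim1, ← claim2, Finset.mul_sum]
    refine Finset.sum_le_sum fun i _ => ?_
    exact mul_le_mul_of_nonneg_right (le_ciSup (Set.finite_range _).bddAbove i) (sq_nonneg _)

lemma hasDerivAt_quad {n : ℕ} (P : Matrix (Fin n) (Fin n) ℝ) {f : ℝ → Fin n → ℝ}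
    {v : Fin n → ℝ} {t : ℝ} (hf : HasDerivAt f v t) :
    HasDerivAt (fun s => f s ⬝ᵥ P *ᵥ f s) (v ⬝ᵥ P *ᵥ f t + f t ⬝ᵥ P *ᵥ v) t := by
  have hfi : ∀ i, HasDerivAt (fun s => f s i) (v i) t := fun i => hasDerivAt_pi.mp hf i
  have h : HasDerivAt (fun s => ∑ i, ∑ j, f s i * (P i j * f s j))
      (∑ i, ∑ j, (v i * (P i j * f t j) + f t i * (P i j * v j))) t := by
    refine HasDerivAt.fun_sum fun i _ => HasDerivAt.fun_sum fun j _ => ?_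
    have := ((hfi i).fun_mul (((hfi j).const_mul (P i j))))
    simpa [mul_comm, mul_assoc, mul_left_comm] using this
  have heq : (fun s => f s ⬝ᵥ P *ᵥ f s) = fun s => ∑ i, ∑ j, f s i * (P i j * f s j) := by
    funext s; simp [dotProduct, Matrix.mulVec, Finset.mul_sum]
  rw [heq]
  convert h using 1
  simp [dotProduct, Matrix.mulVec, Finset.mul_sum, Finset.sum_add_distrib]

lemma trace_eq {N m : ℕ} {Lhalf Lam : Matrix (Fin m) (Fin m) ℝ}
    (hD : Lhalf.IsDiag) (hSq : Lhalf * Lhalf = Lam) (W : Matrix (Fin N) (Fin m) ℝ) :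
    ((W * Lhalf)ᵀ * (W * Lhalf)).trace = ∑ i, ∑ j, W i j ^ 2 * Lam j j := by
  have hentry : ∀ i j, (W * Lhalf) i j = W i j * Lhalf j j := by
    intro i j
    rw [Matrix.mul_apply]
    exact Finset.sum_eq_single j (fun k _ hk => by rw [hD hk, mul_zero]) (by simp)
  have hLam : ∀ j, Lam j j = Lhalf j j ^ 2 := by
    intro j
    rw [← hSq, Matrix.mul_apply]
    rw [Finset.sum_eq_single j (fun k _ hk => by rw [hD (Ne.symm hk), zero_mul]) (by simp)]
    ring
  rw [Matrix.trace]
  simp only [Matrix.diag_apply, Matrix.mul_apply, Matrix.transpose_apply, hentry, hLam]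
  rw [Finset.sum_comm]
  exact Finset.sum_congr rfl fun i _ => Finset.sum_congr rfl fun j _ => by ring

lemma ident {n N m : ℕ} (P : Matrix (Fin n) (Fin n) ℝ) (B : Matrix (Fin n) (Fin m) ℝ)
    {Lam : Matrix (Fin m) (Fin m) ℝ} (hLamDiag : Lam.IsDiag) (W : Matrix (Fin N) (Fin m) ℝ)
    (e : Fin n → ℝ) (σ : Fin N → ℝ) :
    e ⬝ᵥ P *ᵥ ((B * Lam * Wᵀ) *ᵥ σ) = ∑ i, ∑ j, W i j * (σ i * (e ᵥ* (P * B)) j) * Lam j j := by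
  have h1 : P *ᵥ ((B * Lam * Wᵀ) *ᵥ σ) = (P * (B * Lam * Wᵀ)) *ᵥ σ := Matrix.mulVec_mulVec _ _ _
  rw [h1, Matrix.dotProduct_mulVec]
  have h2 : e ᵥ* (P * (B * Lam * Wᵀ)) = (e ᵥ* (P * B)) ᵥ* (Lam * Wᵀ) := by
    rw [Matrix.vecMul_vecMul, Matrix.mul_assoc P B, ← Matrix.mul_assoc B]
  rw [h2]
  have h3 : ∀ j i, (Lam * Wᵀ) j i = Lam j j * W i j := by
    intro j i
    rw [Matrix.mul_apply]
    exact Finset.sum_eq_single j (fun k _ hk => by rw [hLamDiag (Ne.symm hk), zero_mul]) (by simp)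
  simp only [dotProduct, Matrix.vecMul, dotProduct, h3]
  refine Finset.sum_congr rfl fun i _ => ?_
  rw [Finset.sum_mul]
  exact Finset.sum_congr rfl fun j _ => by ring

lemma normInf_le_norm2 {n : ℕ} (v : Fin n → ℝ) : normInf v ≤ norm2 v := by
  rw [normInf, norm2, pi_norm_le_iff_of_nonneg (Real.sqrt_nonneg _)]
  intro i
  rw [Real.norm_eq_abs, ← Real.sqrt_sq_eq_abs]
  exact Real.sqrt_le_sqrt (Finset.single_le_sum (f := fun i => v i ^ 2)
    (fun j _ => sq_nonneg _) (Finset.mem_univ i))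

lemma norm2_eq_norm {n : ℕ} (v : Fin n → ℝ) :
    norm2 v = ‖(WithLp.equiv 2 (Fin n → ℝ)).symm v‖ := by
  rw [EuclideanSpace.norm_eq, norm2]
  congr 1
  exact Finset.sum_congr rfl fun i _ => by simp [Real.norm_eq_abs, sq_abs]

lemma norm2_add_le {n : ℕ} (a b : Fin n → ℝ) : norm2 (a + b) ≤ norm2 a + norm2 b := by
  rw [norm2_eq_norm, norm2_eq_norm, norm2_eq_norm]
  exact norm_add_le _ _

theorem statement8
    {n N m : ℕ} (hn : 0 < n) (hN : 0 < N) (hm : 0 < m)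
    (Ar : Matrix (Fin n) (Fin n) ℝ) (B : Matrix (Fin n) (Fin m) ℝ)
    (Lam Lhalf : Matrix (Fin m) (Fin m) ℝ) (R P : Matrix (Fin n) (Fin n) ℝ)
    (hAr : Hurwitz Ar)
    (hLam : Lam.PosDef) (hLamDiag : Lam.IsDiag)
    (hLhalfDiag : Lhalf.IsDiag) (hLhalfSq : Lhalf * Lhalf = Lam)
    (hR : R.PosDef) (hP : P.PosDef)
    (hLyap : Arᵀ * P + P * Ar + R = 0)
    (γ κ η ξ : ℝ) (hγ : 0 < γ) (hκ : 0 < κ) (hη : 0 < η) (hξ0 : 0 < ξ) (hξ1 : ξ < 1)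
    (σx : ℝ → Fin N → ℝ)
    (e eL xt : ℝ → Fin n → ℝ) (Wt : ℝ → Matrix (Fin N) (Fin m) ℝ)
    (heL0 : eL 0 = 0) (hxt0 : xt 0 = 0)
    (he : ∀ t ≥ (0:ℝ), HasDerivAt e
          (Ar *ᵥ e t - (B * Lam * (Wt t)ᵀ) *ᵥ σx t - κ • (e t - eL t)) t)
    (hW : ∀ t ≥ (0:ℝ), ∀ i j, HasDerivAt (fun s => Wt s i j)
          (γ * (σx t i * ((e t) ᵥ* (P * B)) j)) t)
    (heL : ∀ t ≥ (0:ℝ), HasDerivAt eL (Ar *ᵥ eL t + η • (e t - eL t)) t)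
    (hxt : ∀ t ≥ (0:ℝ), HasDerivAt xt (Ar *ᵥ xt t + κ • (e t - eL t)) t)
    : ∀ t ≥ (0:ℝ),
      normInf (e t + xt t)
        ≤ Real.sqrt ((γ⁻¹ * normF (Wt 0 * Lhalf) ^ 2 + lamMax hP.1 * norm2 (e 0) ^ 2)
              / lamMin hP.1)
          * (1 + Real.sqrt (κ * lamMax hP.1 / (2 * ξ * lamMin hR.1))) := by
  classical
  have hNe : Nonempty (Fin n) := Fin.pos_iff_nonempty.mp hn
  -- basic positivity
  have hlPmin : 0 < lamMin hP.1 := by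
    obtain ⟨i, hi⟩ := exists_eq_ciInf_of_finite (f := hP.1.eigenvalues)
    rw [lamMin, ← hi]; exact hP.eigenvalues_pos i
  have hlPmax : 0 < lamMax hP.1 :=
    lt_of_lt_of_le (hP.eigenvalues_pos (Classical.arbitrary _))
      (le_ciSup (Set.finite_range _).bddAbove _)
  have hlRmin : 0 < lamMin hR.1 := by
    obtain ⟨i, hi⟩ := exists_eq_ciInf_of_finite (f := hR.1.eigenvalues)
    rw [lamMin, ← hi]; exact hR.eigenvalues_pos i
  set p : ℝ := lamMax hP.1 with hpdef
  set s : ℝ := lamMin hR.1 with hsdef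
  set c : ℝ := 2 * ξ * κ⁻¹ * p⁻¹ * s with hcdef
  have hcpos : 0 < c := by positivity
  -- symmetry of the P-quadratic form
  have hPt : Pᵀ = P := by
    ext i j
    have := congrFun (congrFun hP.1 i) j
    simpa [Matrix.conjTranspose_apply] using this
  have symQ : ∀ x y : Fin n → ℝ, x ⬝ᵥ P *ᵥ y = y ⬝ᵥ P *ᵥ x := by
    intro x y
    rw [Matrix.dotProduct_mulVec]
    conv_lhs => rw [← hPt, Matrix.vecMul_transpose]
    exact dotProduct_comm _ _
  -- Lyapunov identity
  have lyapQ : ∀ x : Fin n → ℝ,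
      x ⬝ᵥ P *ᵥ (Ar *ᵥ x) + x ⬝ᵥ P *ᵥ (Ar *ᵥ x) = -(x ⬝ᵥ R *ᵥ x) := by
    intro x
    have hR' : R = -(Arᵀ * P + P * Ar) := eq_neg_of_add_eq_zero_right hLyap
    have h1 : x ⬝ᵥ (Arᵀ * P) *ᵥ x = x ⬝ᵥ P *ᵥ (Ar *ᵥ x) := by
      rw [← Matrix.mulVec_mulVec, Matrix.dotProduct_mulVec x Arᵀ, Matrix.vecMul_transpose]
      exact symQ _ _
    have h2 : x ⬝ᵥ (P * Ar) *ᵥ x = x ⬝ᵥ P *ᵥ (Ar *ᵥ x) := by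
      rw [← Matrix.mulVec_mulVec]
    have h3 : -(x ⬝ᵥ R *ᵥ x) = x ⬝ᵥ (Arᵀ * P) *ᵥ x + x ⬝ᵥ (P * Ar) *ᵥ x := by
      rw [hR', Matrix.neg_mulVec, dotProduct_neg, neg_neg, Matrix.add_mulVec,
        dotProduct_add]
    rw [h3, h1, h2]
  -- positive semidefiniteness facts
  have hPnn : ∀ x : Fin n → ℝ, 0 ≤ x ⬝ᵥ P *ᵥ x := by
    intro x
    have := hP.posSemidef.dotProduct_mulVec_nonneg x
    simpa using this
  have hRnn : ∀ x : Fin n → ℝ, 0 ≤ x ⬝ᵥ R *ᵥ x := by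
    intro x
    have := hR.posSemidef.dotProduct_mulVec_nonneg x
    simpa using this
  -- derivative of the trace part
  have hTr : ∀ t, 0 ≤ t → HasDerivAt (fun u => γ⁻¹ * ((Wt u * Lhalf)ᵀ * (Wt u * Lhalf)).trace)
      (2 * (e t ⬝ᵥ P *ᵥ ((B * Lam * (Wt t)ᵀ) *ᵥ σx t))) t := by
    intro t ht
    have hfun : (fun u => γ⁻¹ * ((Wt u * Lhalf)ᵀ * (Wt u * Lhalf)).trace)
        = fun u => γ⁻¹ * ∑ i, ∑ j, Wt u i j ^ 2 * Lam j j := by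
      funext u; rw [trace_eq hLhalfDiag hLhalfSq]
    rw [hfun]
    have hsum : HasDerivAt (fun u => ∑ i, ∑ j, Wt u i j ^ 2 * Lam j j)
        (∑ i, ∑ j, ((2:ℕ) * Wt t i j ^ (2-1) * (γ * (σx t i * ((e t) ᵥ* (P * B)) j))) * Lam j j) t := by
      refine HasDerivAt.fun_sum fun i _ => HasDerivAt.fun_sum fun j _ => ?_
      exact (((hW t ht i j).pow 2).mul_const (Lam j j))
    have hconst := hsum.const_mul γ⁻¹
    refine hconst.congr_deriv ?_
    symm
    rw [ident P B hLamDiag (Wt t) (e t) (σx t), Finset.mul_sum, Finset.mul_sum]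
    refine Finset.sum_congr rfl fun i _ => ?_
    rw [Finset.mul_sum, Finset.mul_sum]
    refine Finset.sum_congr rfl fun j _ => ?_
    have hγ' : γ ≠ 0 := hγ.ne'
    field_simp
    ring
  -- the composite Lyapunov function and its derivative
  set g : ℝ → ℝ := fun u =>
      (e u ⬝ᵥ P *ᵥ e u + γ⁻¹ * ((Wt u * Lhalf)ᵀ * (Wt u * Lhalf)).trace)
      + η⁻¹ * κ * (eL u ⬝ᵥ P *ᵥ eL u) + c * (xt u ⬝ᵥ P *ᵥ xt u) with hgdef
  set G : ℝ → ℝ := fun t =>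
      (((Ar *ᵥ e t - (B * Lam * (Wt t)ᵀ) *ᵥ σx t - κ • (e t - eL t)) ⬝ᵥ P *ᵥ e t
        + e t ⬝ᵥ P *ᵥ (Ar *ᵥ e t - (B * Lam * (Wt t)ᵀ) *ᵥ σx t - κ • (e t - eL t)))
        + 2 * (e t ⬝ᵥ P *ᵥ ((B * Lam * (Wt t)ᵀ) *ᵥ σx t)))
      + η⁻¹ * κ * ((Ar *ᵥ eL t + η • (e t - eL t)) ⬝ᵥ P *ᵥ eL t
        + eL t ⬝ᵥ P *ᵥ (Ar *ᵥ eL t + η • (e t - eL t)))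
      + c * ((Ar *ᵥ xt t + κ • (e t - eL t)) ⬝ᵥ P *ᵥ xt t
        + xt t ⬝ᵥ P *ᵥ (Ar *ᵥ xt t + κ • (e t - eL t))) with hGdef
  have hg : ∀ t ∈ Set.Ici (0:ℝ), HasDerivAt g (G t) t := by
    intro t ht
    exact (((hasDerivAt_quad P (he t ht)).add (hTr t ht)).add
      ((hasDerivAt_quad P (heL t ht)).const_mul (η⁻¹ * κ))).add
      ((hasDerivAt_quad P (hxt t ht)).const_mul c)
  -- derivative is nonpositive
  have hGle : ∀ t, 0 ≤ t → G t ≤ 0 := by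
    intro t ht
    set a1 : Fin n → ℝ := e t with ha1
    set a2 : Fin n → ℝ := eL t with ha2
    set a3 : Fin n → ℝ := xt t with ha3
    set dv : Fin n → ℝ := a1 - a2 with hdv
    set u : Fin n → ℝ := (B * Lam * (Wt t)ᵀ) *ᵥ σx t with hu
    have hηinv : η⁻¹ * η = 1 := inv_mul_cancel₀ hη.ne'
    have hGeq : G t = -(a1 ⬝ᵥ R *ᵥ a1) - η⁻¹ * κ * (a2 ⬝ᵥ R *ᵥ a2)
        - 2 * κ * (dv ⬝ᵥ P *ᵥ dv) - c * (a3 ⬝ᵥ R *ᵥ a3)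
        + 2 * c * κ * (a3 ⬝ᵥ P *ᵥ dv) := by
      rw [hGdef]
      simp only [← ha1, ← ha2, ← ha3, ← hu, ← hdv]
      simp only [Matrix.mulVec_sub, Matrix.mulVec_add, Matrix.mulVec_smul,
        sub_dotProduct, add_dotProduct, smul_dotProduct,
        dotProduct_sub, dotProduct_add, dotProduct_smul,
        smul_eq_mul, hdv]
      rw [symQ (Ar *ᵥ a1) a1, symQ u a1, symQ (Ar *ᵥ a2) a2, symQ (Ar *ᵥ a3) a3,
        symQ a2 a1, symQ a1 a3, symQ a2 a3]
      linear_combination lyapQ a1 + (η⁻¹ * κ) * lyapQ a2 + c * lyapQ a3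
        + (2 * κ * (a1 ⬝ᵥ P *ᵥ a2) - 2 * κ * (a2 ⬝ᵥ P *ᵥ a2)) * hηinv
    -- Cauchy-Schwarz-type bound for the cross term
    set ε : ℝ := s / (κ * p) with hεdef
    have hε : 0 < ε := by positivity
    have key : 0 ≤ ε^2 * (a3 ⬝ᵥ P *ᵥ a3) - 2 * ε * (a3 ⬝ᵥ P *ᵥ dv) + dv ⬝ᵥ P *ᵥ dv := by
      have h0 := hPnn (ε • a3 - dv)
      have hexp : (ε • a3 - dv) ⬝ᵥ P *ᵥ (ε • a3 - dv)
          = ε^2 * (a3 ⬝ᵥ P *ᵥ a3) - 2 * ε * (a3 ⬝ᵥ P *ᵥ dv) + dv ⬝ᵥ P *ᵥ dv := by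
        simp only [Matrix.mulVec_sub, Matrix.mulVec_smul, dotProduct_sub,
          sub_dotProduct, dotProduct_smul, smul_dotProduct, smul_eq_mul]
        rw [symQ dv a3]
        ring
      rw [hexp] at h0
      exact h0
    have cauchy : 2 * (a3 ⬝ᵥ P *ᵥ dv) ≤ ε * (a3 ⬝ᵥ P *ᵥ a3) + ε⁻¹ * (dv ⬝ᵥ P *ᵥ dv) := by
      have h2 : 2 * ε * (a3 ⬝ᵥ P *ᵥ dv) ≤ ε^2 * (a3 ⬝ᵥ P *ᵥ a3) + dv ⬝ᵥ P *ᵥ dv := by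
        linarith [key]
      have h3 := mul_le_mul_of_nonneg_left h2 (inv_nonneg.2 hε.le)
      calc 2 * (a3 ⬝ᵥ P *ᵥ dv) = ε⁻¹ * (2 * ε * (a3 ⬝ᵥ P *ᵥ dv)) := by
            field_simp
          _ ≤ ε⁻¹ * (ε^2 * (a3 ⬝ᵥ P *ᵥ a3) + dv ⬝ᵥ P *ᵥ dv) := h3
          _ = ε * (a3 ⬝ᵥ P *ᵥ a3) + ε⁻¹ * (dv ⬝ᵥ P *ᵥ dv) := by
            field_simp
    have h1 : c * κ * ε * (a3 ⬝ᵥ P *ᵥ a3) ≤ c * (a3 ⬝ᵥ R *ᵥ a3) := by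
      have r1 : a3 ⬝ᵥ P *ᵥ a3 ≤ p * ∑ i, a3 i ^ 2 := (rayleigh hP.1 a3).2
      have r2 : s * ∑ i, a3 i ^ 2 ≤ a3 ⬝ᵥ R *ᵥ a3 := (rayleigh hR.1 a3).1
      have hεp : c * κ * ε * p = c * s := by
        rw [hεdef]; field_simp
      calc c * κ * ε * (a3 ⬝ᵥ P *ᵥ a3) ≤ c * κ * ε * (p * ∑ i, a3 i ^ 2) :=
            mul_le_mul_of_nonneg_left r1 (by positivity)
        _ = c * (s * ∑ i, a3 i ^ 2) := by
            rw [show c * κ * ε * (p * ∑ i, a3 i ^ 2) = (c * κ * ε * p) * ∑ i, a3 i ^ 2 by ring,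
              hεp]; ring
        _ ≤ c * (a3 ⬝ᵥ R *ᵥ a3) := mul_le_mul_of_nonneg_left r2 hcpos.le
    have h2 : c * κ * ε⁻¹ = 2 * ξ * κ := by
      rw [hcdef, hεdef]
      field_simp
    have cross : 2 * c * κ * (a3 ⬝ᵥ P *ᵥ dv)
        ≤ c * (a3 ⬝ᵥ R *ᵥ a3) + 2 * ξ * κ * (dv ⬝ᵥ P *ᵥ dv) := by
      have := mul_le_mul_of_nonneg_left cauchy (by positivity : (0:ℝ) ≤ c * κ)
      calc 2 * c * κ * (a3 ⬝ᵥ P *ᵥ dv) = c * κ * (2 * (a3 ⬝ᵥ P *ᵥ dv)) := by ring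
        _ ≤ c * κ * (ε * (a3 ⬝ᵥ P *ᵥ a3) + ε⁻¹ * (dv ⬝ᵥ P *ᵥ dv)) := this
        _ = c * κ * ε * (a3 ⬝ᵥ P *ᵥ a3) + c * κ * ε⁻¹ * (dv ⬝ᵥ P *ᵥ dv) := by ring
        _ ≤ c * (a3 ⬝ᵥ R *ᵥ a3) + 2 * ξ * κ * (dv ⬝ᵥ P *ᵥ dv) := by
            rw [h2]; linarith [h1]
    rw [hGeq]
    have hnn1 := hRnn a1
    have hnn2 : 0 ≤ η⁻¹ * κ * (a2 ⬝ᵥ R *ᵥ a2) := by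
      have := hRnn a2; positivity
    have hnn3 : 0 ≤ (1 - ξ) * (κ * (dv ⬝ᵥ P *ᵥ dv)) :=
      mul_nonneg (by linarith) (mul_nonneg hκ.le (hPnn dv))
    linarith [cross]
  -- the Lyapunov function is nonincreasing
  have hcont : ContinuousOn g (Set.Ici 0) := fun u hu => ((hg u hu).continuousAt).continuousWithinAt
  have hdiff : DifferentiableOn ℝ g (interior (Set.Ici (0:ℝ))) := by
    rw [interior_Ici]
    exact fun u hu => ((hg u (Set.mem_Ici.mpr (le_of_lt hu))).differentiableAt).differentiableWithinAt
  have hderivle : ∀ u ∈ interior (Set.Ici (0:ℝ)), deriv g u ≤ 0 := by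
    rw [interior_Ici]
    intro u hu
    rw [(hg u (Set.mem_Ici.mpr hu.le)).deriv]
    exact hGle u hu.le
  have hanti := antitoneOn_of_deriv_nonpos (convex_Ici 0) hcont hdiff hderivle
  -- trace facts
  have htrsq : ∀ (X : Matrix (Fin N) (Fin m) ℝ), (Xᵀ * X).trace = ∑ j, ∑ i, X i j ^ 2 := by
    intro X
    rw [Matrix.trace]
    simp only [Matrix.diag_apply, Matrix.mul_apply, Matrix.transpose_apply]
    exact Finset.sum_congr rfl fun j _ => Finset.sum_congr rfl fun i _ => (sq _).symm
  have htrnn : ∀ u : ℝ, 0 ≤ ((Wt u * Lhalf)ᵀ * (Wt u * Lhalf)).trace := by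
    intro u; rw [htrsq]; positivity
  have hnorm2sq : ∀ (v : Fin n → ℝ), norm2 v ^ 2 = ∑ i, v i ^ 2 := fun v =>
    Real.sq_sqrt (by positivity)
  set εV : ℝ := γ⁻¹ * normF (Wt 0 * Lhalf) ^ 2 + p * norm2 (e 0) ^ 2 with hεVdef
  have hNF : normF (Wt 0 * Lhalf) ^ 2 = ((Wt 0 * Lhalf)ᵀ * (Wt 0 * Lhalf)).trace := by
    rw [normF, Real.sq_sqrt (by positivity), htrsq]
    exact Finset.sum_comm
  have hεVnn : 0 ≤ εV := by
    rw [hεVdef]; positivity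
  have hg0 : g 0 ≤ εV := by
    have hg0' : g 0 = e 0 ⬝ᵥ P *ᵥ e 0 + γ⁻¹ * ((Wt 0 * Lhalf)ᵀ * (Wt 0 * Lhalf)).trace := by
      rw [hgdef]
      simp only [heL0, hxt0, Matrix.mulVec_zero, dotProduct_zero, zero_dotProduct,
        mul_zero, add_zero]
    rw [hg0', hεVdef, hNF, hnorm2sq]
    have hray := (rayleigh hP.1 (e 0)).2
    rw [← hpdef] at hray
    linarith
  intro t ht
  have hgt : g t ≤ εV := le_trans (hanti Set.self_mem_Ici ht ht) hg0
  have hgt' : e t ⬝ᵥ P *ᵥ e t + γ⁻¹ * ((Wt t * Lhalf)ᵀ * (Wt t * Lhalf)).trace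
      + η⁻¹ * κ * (eL t ⬝ᵥ P *ᵥ eL t) + c * (xt t ⬝ᵥ P *ᵥ xt t) ≤ εV := hgt
  clear hgt hanti hg hGle hg0 hcont hdiff hderivle hTr
  clear_value g G
  clear hGdef hgdef g G
  clear_value p s c εV
  have h1 : 0 ≤ γ⁻¹ * ((Wt t * Lhalf)ᵀ * (Wt t * Lhalf)).trace :=
    mul_nonneg (inv_nonneg.2 hγ.le) (htrnn t)
  have h2' : 0 ≤ η⁻¹ * κ * (eL t ⬝ᵥ P *ᵥ eL t) := mul_nonneg (by positivity) (hPnn _)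
  have h3' : 0 ≤ c * (xt t ⬝ᵥ P *ᵥ xt t) := mul_nonneg hcpos.le (hPnn _)
  have hQe : e t ⬝ᵥ P *ᵥ e t ≤ εV := by linarith only [hgt', h1, h2', h3']
  have hQx : c * (xt t ⬝ᵥ P *ᵥ xt t) ≤ εV := by linarith only [hgt', h1, h2', hPnn (e t)]
  have hEsum : lamMin hP.1 * ∑ i, e t i ^ 2 ≤ εV := le_trans (rayleigh hP.1 (e t)).1 hQe
  have hXsum : c * (lamMin hP.1 * ∑ i, xt t i ^ 2) ≤ εV :=
    le_trans (mul_le_mul_of_nonneg_left (rayleigh hP.1 (xt t)).1 hcpos.le) hQx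
  set A : ℝ := Real.sqrt (εV / lamMin hP.1) with hAdef
  have hAe : norm2 (e t) ≤ A := by
    rw [norm2, hAdef]
    apply Real.sqrt_le_sqrt
    rw [le_div_iff₀ hlPmin]
    linarith
  have hAx : norm2 (xt t) ≤ A * Real.sqrt (κ * p / (2 * ξ * s)) := by
    have hid : εV / lamMin hP.1 * (κ * p / (2 * ξ * s)) = εV / (c * lamMin hP.1) := by
      rw [hcdef, div_mul_div_comm, div_eq_div_iff (by positivity) (by positivity)]
      field_simp
    have hsum : ∑ i, xt t i ^ 2 ≤ εV / lamMin hP.1 * (κ * p / (2 * ξ * s)) := by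
      rw [hid, le_div_iff₀ (by positivity)]
      calc (∑ i, xt t i ^ 2) * (c * lamMin hP.1)
          = c * (lamMin hP.1 * ∑ i, xt t i ^ 2) := by ring
        _ ≤ εV := hXsum
    calc norm2 (xt t) = Real.sqrt (∑ i, xt t i ^ 2) := rfl
      _ ≤ Real.sqrt (εV / lamMin hP.1 * (κ * p / (2 * ξ * s))) := Real.sqrt_le_sqrt hsum
      _ = A * Real.sqrt (κ * p / (2 * ξ * s)) := Real.sqrt_mul (by positivity) _
  calc normInf (e t + xt t) ≤ norm2 (e t + xt t) := normInf_le_norm2 _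
    _ ≤ norm2 (e t) + norm2 (xt t) := norm2_add_le _ _
    _ ≤ A + A * Real.sqrt (κ * p / (2 * ξ * s)) := add_le_add hAe hAx
    _ = A * (1 + Real.sqrt (κ * p / (2 * ξ * s))) := by ring
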